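/- arXiv:math/0603163 — 2 statements merged into one kernel-verified Lean document; each statement's English description precedes it below -/
import Mathlib

section
/- For vectors p, q ∈ ℝ² with |p| ≤ 1-ε and |q| ≤ 1-ε (where 0 < ε < 1), setting w_p = √(1-|p|²) and w_q = √(1-|q|²), there exists a constant C(ε) > 0 depending only on ε such that (p - q) · (p/w_p - q/w_q) ≥ C(ε) |p/w_p - q/w_q|². -/
lemma scalar_key (d A B P Q s : ℝ) (hd0 : 0 < d)
    (hA1 : 1 ≤ A) (hB1 : 1 ≤ B) (hAd : A * d ≤ 1) (hBd : B * d ≤ 1)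
    (h1 : A^2 * (1 - P^2) = 1) (h2 : B^2 * (1 - Q^2) = 1)
    (hs : s^2 ≤ P^2 * Q^2) (hs1 : s ≤ P*Q) (hPQ : P*Q ≤ 1)
    (hM : 0 ≤ A^2*P^2 + B^2*Q^2 - 2*A*B*s) :
    A*P^2 + B*Q^2 - (A+B)*s ≥ d^3/2 * (A^2*P^2 + B^2*Q^2 - 2*A*B*s) := by
  set M := A^2*P^2 + B^2*Q^2 - 2*A*B*s with hMdef
  set L := A*P^2 + B*Q^2 - (A+B)*s with hLdef
  set N := A^2*P^2 + B^2*Q^2 + 2*A*B*s with hNdef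
  have hAB : 0 < A*B := mul_pos (by linarith) (by linarith)
  have hid : 2*A*B*L = (A+B)*(M - (A-B)^2) := by
    rw [hLdef, hMdef]; linear_combination (A-B)*h1 - (A-B)*h2
  have heq : M*N = (A-B)^2*(A+B)^2 + 4*A^2*B^2*(P^2*Q^2 - s^2) := by
    rw [hMdef, hNdef]; linear_combination (A^2*P^2 - B^2*Q^2 + A^2 - B^2) * (h2 - h1)
  have hCS : (A-B)^2*(A+B)^2 ≤ M*N := by
    have h4 : (0:ℝ) ≤ 4*A^2*B^2*(P^2*Q^2 - s^2) :=
      mul_nonneg (by positivity) (by linarith)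
    linarith
  have heq2 : (A+B)^2 - N = 2 + 2*(A*B)*(1-s) := by
    rw [hNdef]; linear_combination h1 + h2
  have hsum : N + 2 ≤ (A+B)^2 := by
    have := mul_nonneg hAB.le (by linarith : (0:ℝ) ≤ 1 - s)
    linarith
  have e1 : (M - (A-B)^2)*(A+B)^2 = M*(A+B)^2 - (A-B)^2*(A+B)^2 := by ring
  have e2 : M*(N+2) = M*N + 2*M := by ring
  have hstep : 2*M ≤ (M - (A-B)^2)*(A+B)^2 := by
    have := mul_le_mul_of_nonneg_left hsum hM
    linarith
  have e3 : 2*(A*B*(A+B)*L) = (M - (A-B)^2)*(A+B)^2 := by linear_combination (A+B)*hid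
  have h5 : M ≤ A*B*(A+B)*L := by linarith
  have h7 : A*d*(B*d) ≤ 1 := by
    have := mul_le_mul hAd hBd (by positivity : (0:ℝ) ≤ B*d) (by norm_num : (0:ℝ) ≤ 1)
    linarith
  have h8 : (A+B)*d ≤ 2 := by linarith
  have e5 : A*d*(B*d)*((A+B)*d) = A*B*(A+B)*d^3 := by ring
  have h6 : A*B*(A+B)*d^3 ≤ 2 := by
    have := mul_le_mul h7 h8 (by positivity : (0:ℝ) ≤ (A+B)*d) (by norm_num : (0:ℝ) ≤ 1)
    linarith [e5 ▸ this]
  have hK : 0 < A*B*(A+B) := by positivity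
  have t1 : A*B*(A+B)*d^3*M ≤ 2*M := mul_le_mul_of_nonneg_right h6 hM
  have t2 : (A*B*(A+B)) * (d^3*M) ≤ (A*B*(A+B)) * (2*L) := by nlinarith
  have h9 := le_of_mul_le_mul_left t2 hK
  rw [hLdef, hMdef] at h9 ⊢
  linarith

lemma inner_expand (p q : EuclideanSpace ℝ (Fin 2)) (A B : ℝ) :
    (inner ℝ (p - q) (A • p - B • q) : ℝ) = A*‖p‖^2 + B*‖q‖^2 - (A+B)*(inner ℝ p q : ℝ) := by
  rw [inner_sub_left, inner_sub_right, inner_sub_right, real_inner_smul_right,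
    real_inner_smul_right, real_inner_smul_right, real_inner_smul_right,
    real_inner_self_eq_norm_sq, real_inner_self_eq_norm_sq, real_inner_comm q p]
  ring

lemma norm_expand (p q : EuclideanSpace ℝ (Fin 2)) (A B : ℝ) (hA : 0 ≤ A) (hB : 0 ≤ B) :
    ‖A • p - B • q‖^2 = A^2*‖p‖^2 + B^2*‖q‖^2 - 2*A*B*(inner ℝ p q : ℝ) := by
  rw [@norm_sub_sq_real, real_inner_smul_left, real_inner_smul_right, norm_smul, norm_smul,
    Real.norm_eq_abs, Real.norm_eq_abs, abs_of_nonneg hA, abs_of_nonneg hB, mul_pow, mul_pow]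
  ring

/-- Technical lemma (Lemma 1 of the paper). -/
theorem maximal_surface_technical_lemma (ε : ℝ) (hε0 : 0 < ε) (hε1 : ε < 1) :
    ∃ C : ℝ, 0 < C ∧ ∀ p q : EuclideanSpace ℝ (Fin 2),
      ‖p‖ ≤ 1 - ε → ‖q‖ ≤ 1 - ε →
      (inner ℝ (p - q)
        ((Real.sqrt (1 - ‖p‖ ^ 2))⁻¹ • p - (Real.sqrt (1 - ‖q‖ ^ 2))⁻¹ • q) : ℝ) ≥
        C * ‖(Real.sqrt (1 - ‖p‖ ^ 2))⁻¹ • p - (Real.sqrt (1 - ‖q‖ ^ 2))⁻¹ • q‖ ^ 2 := by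
  have h2ε : 0 < ε * (2 - ε) := by nlinarith
  have hd0 : 0 < Real.sqrt (ε * (2 - ε)) := Real.sqrt_pos.mpr h2ε
  refine ⟨Real.sqrt (ε * (2 - ε)) ^ 3 / 2, by positivity, fun p q hp hq => ?_⟩
  have hP0 : (0:ℝ) ≤ ‖p‖ := norm_nonneg p
  have hQ0 : (0:ℝ) ≤ ‖q‖ := norm_nonneg q
  have hP2 : ε * (2 - ε) ≤ 1 - ‖p‖^2 := by
    nlinarith [mul_nonneg (by linarith : (0:ℝ) ≤ 1 - ε - ‖p‖) (by linarith : (0:ℝ) ≤ 1 - ε + ‖p‖)]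
  have hQ2 : ε * (2 - ε) ≤ 1 - ‖q‖^2 := by
    nlinarith [mul_nonneg (by linarith : (0:ℝ) ≤ 1 - ε - ‖q‖) (by linarith : (0:ℝ) ≤ 1 - ε + ‖q‖)]
  have hwp : Real.sqrt (ε * (2 - ε)) ≤ Real.sqrt (1 - ‖p‖^2) := Real.sqrt_le_sqrt hP2
  have hwq : Real.sqrt (ε * (2 - ε)) ≤ Real.sqrt (1 - ‖q‖^2) := Real.sqrt_le_sqrt hQ2
  have hwp0 : 0 < Real.sqrt (1 - ‖p‖^2) := lt_of_lt_of_le hd0 hwp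
  have hwq0 : 0 < Real.sqrt (1 - ‖q‖^2) := lt_of_lt_of_le hd0 hwq
  have hwp1 : Real.sqrt (1 - ‖p‖^2) ≤ 1 := Real.sqrt_le_one.mpr (by nlinarith)
  have hwq1 : Real.sqrt (1 - ‖q‖^2) ≤ 1 := Real.sqrt_le_one.mpr (by nlinarith)
  have hA1 : 1 ≤ (Real.sqrt (1 - ‖p‖^2))⁻¹ := (one_le_inv₀ hwp0).mpr hwp1
  have hB1 : 1 ≤ (Real.sqrt (1 - ‖q‖^2))⁻¹ := (one_le_inv₀ hwq0).mpr hwq1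
  have hAd : (Real.sqrt (1 - ‖p‖^2))⁻¹ * Real.sqrt (ε * (2 - ε)) ≤ 1 := by
    rw [inv_mul_eq_div, div_le_one hwp0]; exact hwp
  have hBd : (Real.sqrt (1 - ‖q‖^2))⁻¹ * Real.sqrt (ε * (2 - ε)) ≤ 1 := by
    rw [inv_mul_eq_div, div_le_one hwq0]; exact hwq
  have hsqp : Real.sqrt (1 - ‖p‖^2) ^ 2 = 1 - ‖p‖^2 := Real.sq_sqrt (le_trans h2ε.le hP2)
  have hsqq : Real.sqrt (1 - ‖q‖^2) ^ 2 = 1 - ‖q‖^2 := Real.sq_sqrt (le_trans h2ε.le hQ2)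
  have h1 : ((Real.sqrt (1 - ‖p‖^2))⁻¹)^2 * (1 - ‖p‖^2) = 1 := by
    rw [inv_pow, hsqp]
    exact inv_mul_cancel₀ (ne_of_gt (lt_of_lt_of_le h2ε hP2))
  have h2 : ((Real.sqrt (1 - ‖q‖^2))⁻¹)^2 * (1 - ‖q‖^2) = 1 := by
    rw [inv_pow, hsqq]
    exact inv_mul_cancel₀ (ne_of_gt (lt_of_lt_of_le h2ε hQ2))
  have hs1 : (inner ℝ p q : ℝ) ≤ ‖p‖ * ‖q‖ := real_inner_le_norm p q
  have hs : (inner ℝ p q : ℝ)^2 ≤ ‖p‖^2 * ‖q‖^2 := by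
    have h := abs_real_inner_le_norm p q
    nlinarith [sq_abs (inner ℝ p q : ℝ), abs_nonneg (inner ℝ p q : ℝ)]
  have hPQ : ‖p‖ * ‖q‖ ≤ 1 := by nlinarith
  have hnorm := norm_expand p q ((Real.sqrt (1 - ‖p‖^2))⁻¹) ((Real.sqrt (1 - ‖q‖^2))⁻¹)
    (by positivity) (by positivity)
  have hM : 0 ≤ ((Real.sqrt (1 - ‖p‖^2))⁻¹)^2*‖p‖^2 + ((Real.sqrt (1 - ‖q‖^2))⁻¹)^2*‖q‖^2
      - 2*(Real.sqrt (1 - ‖p‖^2))⁻¹*(Real.sqrt (1 - ‖q‖^2))⁻¹*(inner ℝ p q : ℝ) := by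
    rw [← hnorm]; positivity
  rw [inner_expand p q ((Real.sqrt (1 - ‖p‖^2))⁻¹) ((Real.sqrt (1 - ‖q‖^2))⁻¹), hnorm]
  exact scalar_key (Real.sqrt (ε * (2 - ε))) ((Real.sqrt (1 - ‖p‖^2))⁻¹)
    ((Real.sqrt (1 - ‖q‖^2))⁻¹) ‖p‖ ‖q‖ (inner ℝ p q : ℝ)
    hd0 hA1 hB1 hAd hBd h1 h2 hs hs1 hPQ hM
end

section
/- Let μ > 0, δ > 0, C > 0, r₀ > 0, and let η : [r₀, ∞) → ℝ be a continuous nonnegative function satisfying μ + C ∫_{r₀}^{r} η²(t)/(2πt) dt ≤ 2δ η(r) for all r ≥ r₀. Then no such η exists; i.e., the integral inequality leads to a contradiction (η must blow up before r₁ = r₀ exp(16πδ²/(μC)) while remaining finite and continuous). -/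
set_option maxHeartbeats 1000000


/-- No continuous nonnegative η on [r₀,∞) can satisfy the integral
inequality μ + C ∫_{r₀}^r η²(t)/(2πt) dt ≤ 2δ η(r) for all r ≥ r₀. -/
theorem no_solution_of_integral_inequality (μ δ C r₀ : ℝ)
    (hμ : 0 < μ) (hδ : 0 < δ) (hC : 0 < C) (hr₀ : 0 < r₀)
    (η : ℝ → ℝ) (hcont : ContinuousOn η (Set.Ici r₀))
    (hnn : ∀ r ∈ Set.Ici r₀, 0 ≤ η r)
    (hineq : ∀ r ∈ Set.Ici r₀,
      μ + C * ∫ t in r₀..r, (η t) ^ 2 / (2 * Real.pi * t) ≤ 2 * δ * η r) :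
    False := by
  have hπ : 0 < Real.pi := Real.pi_pos
  set a0 : ℝ := μ / (2 * δ) with ha0def
  have ha0 : 0 < a0 := div_pos hμ (by linarith)
  set c : ℝ := 8 * Real.pi * δ / (C * a0) with hcdef
  have hc : 0 < c := by positivity
  set L : ℕ → ℝ := fun k => c * (1/2)^k with hLdef
  have hLpos : ∀ k, 0 < L k := fun k => by
    simp only [hLdef]; positivity
  set s : ℕ → ℝ := fun n => r₀ * Real.exp (∑ k ∈ Finset.range n, L k) with hsdef
  have hsum_nonneg : ∀ n, 0 ≤ ∑ k ∈ Finset.range n, L k := fun n =>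
    Finset.sum_nonneg fun k _ => (hLpos k).le
  have hs_ge : ∀ n, r₀ ≤ s n := by
    intro n
    have : (1:ℝ) ≤ Real.exp (∑ k ∈ Finset.range n, L k) :=
      Real.one_le_exp (hsum_nonneg n)
    calc r₀ = r₀ * 1 := by ring
    _ ≤ s n := by
      simp only [hsdef]
      exact mul_le_mul_of_nonneg_left this hr₀.le
  have hs_pos : ∀ n, 0 < s n := fun n => lt_of_lt_of_le hr₀ (hs_ge n)
  -- integrability helper
  have hfc : ∀ a b : ℝ, r₀ ≤ a → a ≤ b →
      IntervalIntegrable (fun u => η u ^ 2 / (2 * Real.pi * u))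
        MeasureTheory.volume a b := by
    intro a b ha hab
    apply ContinuousOn.intervalIntegrable
    have hsub : Set.uIcc a b ⊆ Set.Ici r₀ := by
      rw [Set.uIcc_of_le hab]
      intro x hx
      exact le_trans ha hx.1
    apply ContinuousOn.div
    · exact ((hcont.mono hsub).pow 2)
    · exact (continuous_const.mul continuous_id).continuousOn
    · intro x hx
      have hx0 : 0 < x := lt_of_lt_of_le hr₀ (hsub hx)
      positivity
  -- nonnegativity of integrand
  have hfnn : ∀ u, r₀ ≤ u → 0 ≤ η u ^ 2 / (2 * Real.pi * u) := by
    intro u hu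
    have hu0 : 0 < u := lt_of_lt_of_le hr₀ hu
    positivity
  -- key induction
  have key : ∀ n, ∀ t, s n ≤ t → a0 * 2 ^ n ≤ η t := by
    intro n
    induction n with
    | zero =>
      intro t ht
      have hs0 : s 0 = r₀ := by simp [hsdef]
      have ht0 : r₀ ≤ t := hs0 ▸ ht
      have h1 := hineq t ht0
      have h2 : 0 ≤ ∫ u in r₀..t, η u ^ 2 / (2 * Real.pi * u) :=
        intervalIntegral.integral_nonneg ht0 fun u hu => hfnn u hu.1
      have : μ ≤ 2 * δ * η t := by nlinarith
      rw [ha0def]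
      simp only [pow_zero, mul_one]
      rw [div_le_iff₀ (by linarith : (0:ℝ) < 2 * δ)]
      nlinarith
    | succ n ih =>
      intro t ht
      have hsucc : s (n+1) = s n * Real.exp (L n) := by
        simp only [hsdef, Finset.sum_range_succ, Real.exp_add, mul_assoc]
      rw [hsucc] at ht
      set r : ℝ := t * Real.exp (-(L n)) with hrdef
      have hexp_pos : 0 < Real.exp (-(L n)) := Real.exp_pos _
      have hr_ge : s n ≤ r := by
        have := mul_le_mul_of_nonneg_right ht hexp_pos.le
        calc s n = s n * Real.exp (L n) * Real.exp (-(L n)) := by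
              rw [mul_assoc, ← Real.exp_add]; simp
        _ ≤ t * Real.exp (-(L n)) := this
      have ht_pos : 0 < t := lt_of_lt_of_le (by nlinarith [hs_pos n, Real.exp_pos (L n), Real.one_le_exp (hLpos n).le]) ht
      have hr_pos : 0 < r := lt_of_lt_of_le (hs_pos n) hr_ge
      have hr₀r : r₀ ≤ r := le_trans (hs_ge n) hr_ge
      have hrt : r ≤ t := by
        have h1 : Real.exp (-(L n)) ≤ 1 := by
          rw [Real.exp_le_one_iff]; linarith [hLpos n]
        calc r = t * Real.exp (-(L n)) := rfl
        _ ≤ t * 1 := mul_le_mul_of_nonneg_left h1 ht_pos.le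
        _ = t := by ring
      have ht₀ : r₀ ≤ t := le_trans hr₀r hrt
      -- lower bound on [r,t]
      set K : ℝ := a0 * 2 ^ n with hKdef
      have hK : 0 < K := by positivity
      have hlow : ∀ u ∈ Set.Icc r t, K ≤ η u := fun u hu =>
        ih u (le_trans hr_ge hu.1)
      -- monotone integral bound
      have hgint : IntervalIntegrable (fun u => K ^ 2 / (2 * Real.pi * u))
          MeasureTheory.volume r t := by
        apply ContinuousOn.intervalIntegrable
        apply ContinuousOn.div continuousOn_const
          (continuous_const.mul continuous_id).continuousOn
        intro x hx
        rw [Set.uIcc_of_le hrt] at hx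
        have hx0 : 0 < x := lt_of_lt_of_le hr_pos hx.1
        show 2 * Real.pi * x ≠ 0
        positivity
      have hmono : (∫ u in r..t, K ^ 2 / (2 * Real.pi * u)) ≤
          ∫ u in r..t, η u ^ 2 / (2 * Real.pi * u) := by
        apply intervalIntegral.integral_mono_on hrt hgint (hfc r t hr₀r hrt)
        intro u hu
        have hu0 : 0 < u := lt_of_lt_of_le hr_pos hu.1
        have h1 : K ≤ η u := hlow u hu
        have h2 : K ^ 2 ≤ η u ^ 2 := by nlinarith
        gcongr
      -- compute the lower integral
      have hval : (∫ u in r..t, K ^ 2 / (2 * Real.pi * u)) =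
          K ^ 2 / (2 * Real.pi) * L n := by
        have h0 : ∀ u : ℝ, K ^ 2 / (2 * Real.pi * u) = K ^ 2 / (2 * Real.pi) * (1/u) := by
          intro u; field_simp
        simp_rw [h0]
        rw [intervalIntegral.integral_const_mul, integral_one_div]
        · have htr : t / r = Real.exp (L n) := by
            rw [hrdef]
            rw [Real.exp_neg]
            field_simp
          rw [htr, Real.log_exp]
        · rw [Set.uIcc_of_le hrt]
          intro h0mem
          exact absurd h0mem.1 (by linarith)
      -- split the integral
      have hsplit : (∫ u in r₀..r, η u ^ 2 / (2 * Real.pi * u)) +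
          (∫ u in r..t, η u ^ 2 / (2 * Real.pi * u)) =
          ∫ u in r₀..t, η u ^ 2 / (2 * Real.pi * u) :=
        intervalIntegral.integral_add_adjacent_intervals
          (hfc r₀ r le_rfl hr₀r) (hfc r t hr₀r hrt)
      have hI1 : 0 ≤ ∫ u in r₀..r, η u ^ 2 / (2 * Real.pi * u) :=
        intervalIntegral.integral_nonneg hr₀r fun u hu => hfnn u hu.1
      have h1 := hineq t ht₀
      -- the crucial arithmetic identity
      have hid : C * (K ^ 2 / (2 * Real.pi) * L n) = 4 * δ * K := by
        simp only [hLdef, hKdef, hcdef]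
        field_simp
        have h2n : (2:ℝ) ^ n * (1 / 2) ^ n = 1 := by rw [← mul_pow]; norm_num
        linear_combination 8 * h2n
      have h2 : 4 * δ * K ≤ 2 * δ * η t := by
        rw [← hid]
        calc C * (K ^ 2 / (2 * Real.pi) * L n)
            ≤ C * ∫ u in r..t, η u ^ 2 / (2 * Real.pi * u) := by
              rw [← hval]; exact mul_le_mul_of_nonneg_left hmono hC.le
        _ ≤ μ + C * ∫ u in r₀..t, η u ^ 2 / (2 * Real.pi * u) := by
              rw [← hsplit]; nlinarith
        _ ≤ 2 * δ * η t := h1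
      have : a0 * 2 ^ (n+1) = 2 * K := by rw [hKdef]; ring
      rw [this]
      nlinarith
  -- conclude
  set S : ℝ := r₀ * Real.exp (2 * c) with hSdef
  have hgeom : ∀ n, ∑ k ∈ Finset.range n, (1/2:ℝ)^k ≤ 2 := by
    intro n
    have h : ∀ m, ∑ k ∈ Finset.range m, (1/2:ℝ)^k = 2 - 2 * (1/2)^m := by
      intro m
      induction m with
      | zero => simp
      | succ m ihm =>
        rw [Finset.sum_range_succ, ihm, pow_succ]
        ring
    rw [h n]
    have : (0:ℝ) ≤ (1/2)^n := by positivity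
    linarith
  have hsS : ∀ n, s n ≤ S := by
    intro n
    have hsum : ∑ k ∈ Finset.range n, L k ≤ 2 * c := by
      simp only [hLdef]
      rw [← Finset.mul_sum]
      nlinarith [hgeom n]
    simp only [hsdef, hSdef]
    exact mul_le_mul_of_nonneg_left (Real.exp_le_exp.2 hsum) hr₀.le
  obtain ⟨n, hn⟩ := pow_unbounded_of_one_lt (η S / a0) (by norm_num : (1:ℝ) < 2)
  have h1 : a0 * 2 ^ n ≤ η S := key n S (hsS n)
  have h2 : η S < a0 * 2 ^ n := by
    rw [div_lt_iff₀ ha0] at hn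
    linarith [hn]
  linarith
end
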